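/- Define Q⁰(x,y,z) = ½{F(x,φy,z) + η(z)F(x,φy,ξ) - 2η(y)F(x,φz,ξ)} on an almost contact B-metric vector space, where F is a trilinear form satisfying F(x,y,z)=F(x,z,y) and F(x,y,z)=F(x,φy,φz)+η(y)F(x,ξ,z)+η(z)F(x,y,ξ). Then Q⁰ satisfies the natural-connection conditions: Q⁰(x,y,φz) - Q⁰(x,φy,z) = F(x,y,z) and Q⁰(x,y,z) = -Q⁰(x,z,y) for all x,y,z. -/
import Mathlib


theorem stmt14 (V : Type*) [AddCommGroup V] [Module ℝ V]
    (φ : V →ₗ[ℝ] V) (ξ : V) (η : V →ₗ[ℝ] ℝ)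
    (hφξ : φ ξ = 0) (hφ2 : ∀ x : V, φ (φ x) = -x + η x • ξ)
    (hηφ : ∀ x : V, η (φ x) = 0) (hηξ : η ξ = 1)
    (g : V →ₗ[ℝ] V →ₗ[ℝ] ℝ) (hsym : ∀ x y : V, g x y = g y x)
    (hB : ∀ x y : V, g (φ x) (φ y) = - g x y + η x * η y)
    (F : V →ₗ[ℝ] V →ₗ[ℝ] V →ₗ[ℝ] ℝ)
    (hF1 : ∀ x y z : V, F x y z = F x z y)
    (hF2 : ∀ x y z : V, F x y z = F x (φ y) (φ z) + η y * F x ξ z + η z * F x y ξ)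
    (Q0 : V → V → V → ℝ)
    (hQ0 : ∀ x y z : V, Q0 x y z =
      (1 / 2) * (F x (φ y) z + η z * F x (φ y) ξ - 2 * η y * F x (φ z) ξ)) :
    (∀ x y z : V, Q0 x y (φ z) - Q0 x (φ y) z = F x y z) ∧
    (∀ x y z : V, Q0 x y z = - Q0 x z y) := by
  have hξξ : ∀ x : V, F x ξ ξ = 0 := by
    intro x
    have h := hF2 x ξ ξ
    simp [hφξ, hηξ] at h
    linarith
  constructor
  · intro x y z
    rw [hQ0, hQ0]
    simp only [hφ2, hηφ, map_add, map_neg, map_smul, smul_eq_mul,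
      LinearMap.add_apply, LinearMap.neg_apply, LinearMap.smul_apply]
    have h1 := hF2 x y z
    have h2 := hF1 x z ξ
    have h3 := hξξ x
    linear_combination (-1/2) * h1 + (η y) * h2 + (-3/2) * (η y) * (η z) * h3
  · intro x y z
    rw [hQ0, hQ0]
    have h1 := hF2 x (φ y) z
    simp only [hφ2, hηφ, map_add, map_neg, map_smul, smul_eq_mul,
      LinearMap.add_apply, LinearMap.neg_apply, LinearMap.smul_apply] at h1
    have h2 := hF1 x y (φ z)
    have h3 := hF1 x ξ (φ z)
    linear_combination (1/2) * h1 + (-1/2) * h2 + (1/2) * (η y) * h3
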